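/- In the degenerate case the phased method can fail: there exists a cost function C on {0,1}² with exactly two global minimizers both having the same first-coordinate distribution, and a phase assignment γ, such that the phased trace ∑_{x : x_0 = i} e^{i γ_x} e^{−τ C(x)} vanishes identically in τ for the value of i containing the minimizers, so the argmax of the phased trace moduli does not identify an optimal first coordinate. -/

import Mathlib

lemma sum_fin2fun (f : (Fin 2 → Fin 2) → ℂ) :
    ∑ z : Fin 2 → Fin 2, f z =
      f ![0,0] + f ![0,1] + f ![1,0] + f ![1,1] := by
  rw [← (piFinTwoEquiv fun _ => Fin 2).symm.sum_comp f]
  rw [Fintype.sum_prod_type]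
  simp [Fin.sum_univ_two, piFinTwoEquiv]
  ring_nf

/-- In the degenerate case the phased method can fail: there is a cost on `{0,1}²`
with exactly two global minimizers sharing the same first coordinate, and a phase
assignment, such that the phased Half Partial Trace on the minimizers' first value
vanishes identically in `τ`, while the other component has positive modulus, so the
argmax of the phased trace moduli does not identify an optimal first coordinate. -/
theorem phased_trace_degenerate_failure :
    ∃ (C : (Fin 2 → Fin 2) → ℝ) (γ : (Fin 2 → Fin 2) → ℝ)
      (x y : Fin 2 → Fin 2),
      x ≠ y ∧ x 0 = y 0 ∧ (∀ z, C x ≤ C z) ∧ (∀ z, C y ≤ C z) ∧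
      (∀ z, (∀ u, C z ≤ C u) → z = x ∨ z = y) ∧
      (∀ τ : ℝ,
        (∑ z : Fin 2 → Fin 2,
            if z 0 = x 0 then
              Complex.exp (Complex.I * (γ z : ℂ)) * (Real.exp (-τ * C z) : ℂ)
            else 0) = 0) ∧
      (∀ τ : ℝ, (0 : ℝ) <
        ‖∑ z : Fin 2 → Fin 2,
            if z 0 ≠ x 0 then
              Complex.exp (Complex.I * (γ z : ℂ)) * (Real.exp (-τ * C z) : ℂ)
            else 0‖) := by
  refine ⟨fun z => if z 0 = 0 then 0 else 1,
    fun z => if z = ![0,1] then Real.pi else 0, ![0,0], ![0,1], ?_, ?_, ?_, ?_, ?_, ?_, ?_⟩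
  · intro h
    have := congrFun h 1
    simp at this
  · rfl
  · intro z; simp; split <;> norm_num
  · intro z; simp; split <;> norm_num
  · intro z hz
    have h0 := hz ![0,0]
    simp at h0
    have hz0 : z 0 = 0 := by
      by_contra h
      simp [h] at h0
      linarith
    rcases Fin.exists_fin_two.mp ⟨z 1, rfl⟩ with _ | _
    · by_cases h1 : z 1 = 0
      · left; ext i; fin_cases i <;> simp [hz0, h1]
      · right
        have h1' : z 1 = 1 := by omega
        ext i; fin_cases i <;> simp [hz0, h1']
    · by_cases h1 : z 1 = 0
      · left; ext i; fin_cases i <;> simp [hz0, h1]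
      · right
        have h1' : z 1 = 1 := by omega
        ext i; fin_cases i <;> simp [hz0, h1']
  · intro τ
    rw [sum_fin2fun]
    have hne : (![0,0] : Fin 2 → Fin 2) ≠ ![0,1] := by
      intro h; have := congrFun h 1; simp at this
    have hne2 : (![1,0] : Fin 2 → Fin 2) ≠ ![0,1] := by
      intro h; have := congrFun h 0; simp at this
    have hne3 : (![1,1] : Fin 2 → Fin 2) ≠ ![0,1] := by
      intro h; have := congrFun h 0; simp at this
    simp [hne, hne2, hne3]
    rw [mul_comm, Complex.exp_pi_mul_I]
    ring
  · intro τ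
    rw [sum_fin2fun]
    have hne2 : (![1,0] : Fin 2 → Fin 2) ≠ ![0,1] := by
      intro h; have := congrFun h 0; simp at this
    have hne3 : (![1,1] : Fin 2 → Fin 2) ≠ ![0,1] := by
      intro h; have := congrFun h 0; simp at this
    simp [hne2, hne3]
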